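/- Let g : ℝ → ℝ be three times continuously differentiable with bounded derivatives of orders one, two and three, and let α : ℝ × ℝ → ℝ be four times continuously differentiable (jointly in (y,z)) and satisfy the Doss ODE ∂α/∂z(y,z) = g(α(y,z)) for all (y,z) ∈ ℝ × ℝ, with initial condition α(y,0) = y for all y ∈ ℝ. Then there exists a constant C > 0, depending only on sup|g′|, sup|g″| and sup|g‴|, such that |∂³α/∂y³(y,z)| ≤ exp(C|z|) for all (y,z) ∈ ℝ × ℝ. -/

import Mathlib

open Real Set

private lemma exp_sub_one_le' {a : ℝ} (_ha : 0 ≤ a) : Real.exp a - 1 ≤ a * Real.exp a := by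
  have h1 : 1 - a ≤ Real.exp (-a) := by have := Real.add_one_le_exp (-a); linarith
  have h2 : Real.exp (-a) * Real.exp a = 1 := by rw [← Real.exp_add]; simp
  nlinarith [Real.exp_pos a]

private lemma self_le_exp (x : ℝ) : x ≤ Real.exp x := by
  have := Real.add_one_le_exp x; linarith

private lemma gronwallBound_le' {δ K ε x : ℝ} (hK : 0 ≤ K) (hε : 0 ≤ ε) (hx : 0 ≤ x) :
    gronwallBound δ K ε x ≤ δ * Real.exp (K * x) + ε * x * Real.exp (K * x) := by
  rcases eq_or_lt_of_le hK with h | h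
  · rw [← h, gronwallBound_K0]
    simp only [zero_mul, Real.exp_zero, mul_one]
    linarith
  · rw [gronwallBound_of_K_ne_0 (ne_of_gt h)]
    have h1 : Real.exp (K * x) - 1 ≤ (K * x) * Real.exp (K * x) :=
      exp_sub_one_le' (mul_nonneg h.le hx)
    have h2 : ε / K * (Real.exp (K * x) - 1) ≤ ε / K * ((K * x) * Real.exp (K * x)) :=
      mul_le_mul_of_nonneg_left h1 (div_nonneg hε h.le)
    have h3 : ε / K * ((K * x) * Real.exp (K * x)) = ε * x * Real.exp (K * x) := by
      field_simp
    linarith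

private lemma gron_right (u u' : ℝ → ℝ) (hu : ∀ t, HasDerivAt u (u' t) t)
    (K ε δ z : ℝ) (hz : 0 ≤ z)
    (hb : ∀ t, |t| ≤ |z| → |u' t| ≤ K * |u t| + ε) (h0 : |u 0| ≤ δ) :
    |u z| ≤ gronwallBound δ K ε |z| := by
  have habs : |z| = z := abs_of_nonneg hz
  have key := norm_le_gronwallBound_of_norm_deriv_right_le (f := u) (f' := u') (a := 0) (b := z)
    (δ := δ) (K := K) (ε := ε)
    (fun t _ => (hu t).continuousAt.continuousWithinAt)
    (fun t _ => (hu t).hasDerivWithinAt)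
    (by simpa using h0)
    (fun t ht => by
      have := hb t (by rw [habs, abs_of_nonneg ht.1]; exact ht.2.le)
      simpa using this)
    z (right_mem_Icc.2 hz)
  simpa [habs] using key

private lemma gron_abs (u u' : ℝ → ℝ) (hu : ∀ t, HasDerivAt u (u' t) t)
    (K ε δ z : ℝ)
    (hb : ∀ t, |t| ≤ |z| → |u' t| ≤ K * |u t| + ε) (h0 : |u 0| ≤ δ) :
    |u z| ≤ gronwallBound δ K ε |z| := by
  rcases le_total 0 z with hz | hz
  · exact gron_right u u' hu K ε δ z hz hb h0
  · have hu' : ∀ t, HasDerivAt (fun s => u (-s)) (-u' (-t)) t := by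
      intro t
      have := (hu (-t)).comp t (hasDerivAt_neg t)
      simpa [mul_comm, Function.comp_def] using this
    have key := gron_right (fun s => u (-s)) (fun t => -u' (-t)) hu' K ε δ (-z)
      (by linarith)
      (fun t ht => by
        simp only [abs_neg] at *
        exact hb (-t) (by simpa using ht))
      (by simpa using h0)
    simpa [abs_neg] using key

private lemma hasDerivAt_congr_deriv {f : ℝ → ℝ} {a b x : ℝ}
    (h : HasDerivAt f a x) (e : a = b) : HasDerivAt f b x := e ▸ h

section core

private lemma secY {F : ℝ × ℝ → ℝ} (hF : Differentiable ℝ F) (p : ℝ × ℝ) :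
    HasDerivAt (fun y' => F (y', p.2)) (fderiv ℝ F p ((1 : ℝ), (0 : ℝ))) p.1 := by
  have h1 : HasDerivAt (fun y' : ℝ => (y', p.2)) ((1 : ℝ), (0 : ℝ)) p.1 :=
    HasDerivAt.prodMk (hasDerivAt_id p.1) (hasDerivAt_const _ _)
  exact (hF p).hasFDerivAt.comp_hasDerivAt p.1 h1

private lemma secZ {F : ℝ × ℝ → ℝ} (hF : Differentiable ℝ F) (p : ℝ × ℝ) :
    HasDerivAt (fun z' => F (p.1, z')) (fderiv ℝ F p ((0 : ℝ), (1 : ℝ))) p.2 := by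
  have h1 : HasDerivAt (fun z' : ℝ => (p.1, z')) ((0 : ℝ), (1 : ℝ)) p.2 :=
    HasDerivAt.prodMk (hasDerivAt_const _ _) (hasDerivAt_id p.2)
  exact (hF p).hasFDerivAt.comp_hasDerivAt p.2 h1

private lemma applyD {F : ℝ × ℝ → ℝ} (hF : ContDiff ℝ 2 F) (v w p : ℝ × ℝ) :
    fderiv ℝ (fun q => fderiv ℝ F q v) p w = fderiv ℝ (fderiv ℝ F) p w v := by
  have hd : HasFDerivAt (fderiv ℝ F) (fderiv ℝ (fderiv ℝ F) p) p :=
    (((hF.fderiv_right (m := 1) (by norm_num)).differentiable one_ne_zero) p).hasFDerivAt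
  have h : HasFDerivAt (fun q => fderiv ℝ F q v)
      ((ContinuousLinearMap.apply ℝ ℝ v).comp (fderiv ℝ (fderiv ℝ F) p)) p :=
    (ContinuousLinearMap.apply ℝ ℝ v).hasFDerivAt.comp p hd
  rw [h.fderiv]; rfl

private lemma symm2 {F : ℝ × ℝ → ℝ} (hF : ContDiff ℝ 2 F) (p v w : ℝ × ℝ) :
    fderiv ℝ (fderiv ℝ F) p v w = fderiv ℝ (fderiv ℝ F) p w v :=
  second_derivative_symmetric
    (fun q => ((hF.differentiable (by norm_num)) q).hasFDerivAt)
    ((((hF.fderiv_right (m := 1) (by norm_num)).differentiable one_ne_zero) p).hasFDerivAt) v w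

private lemma swapD {F H : ℝ × ℝ → ℝ} (hF : ContDiff ℝ 2 F)
    (hFH : ∀ p, fderiv ℝ F p ((0 : ℝ), (1 : ℝ)) = H p) (p : ℝ × ℝ) :
    HasDerivAt (fun z' => fderiv ℝ F (p.1, z') ((1 : ℝ), (0 : ℝ)))
      (fderiv ℝ H p ((1 : ℝ), (0 : ℝ))) p.2 := by
  have hF₁ : ContDiff ℝ 1 (fun q => fderiv ℝ F q ((1 : ℝ), (0 : ℝ))) :=
    (hF.fderiv_right (by norm_num)).clm_apply contDiff_const
  have h1 := secZ (hF₁.differentiable one_ne_zero) p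
  have h2 : fderiv ℝ (fun q => fderiv ℝ F q ((1 : ℝ), (0 : ℝ))) p ((0 : ℝ), (1 : ℝ))
      = fderiv ℝ H p ((1 : ℝ), (0 : ℝ)) := by
    rw [applyD hF _ _ p, symm2 hF p, ← applyD hF _ _ p]
    have hh : (fun q => fderiv ℝ F q ((0 : ℝ), (1 : ℝ))) = H := funext hFH
    rw [hh]
  rw [h2] at h1
  exact h1

private lemma key (g : ℝ → ℝ) (hg : ContDiff ℝ 3 g)
    (α : ℝ × ℝ → ℝ) (hα : ContDiff ℝ 4 α)
    (hode : ∀ y z : ℝ, HasDerivAt (fun z' => α (y, z')) (g (α (y, z))) z)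
    (hinit : ∀ y : ℝ, α (y, 0) = y)
    (K L₂ L₃ : ℝ)
    (hK : ∀ x, |deriv g x| ≤ K)
    (hL₂ : ∀ x, |deriv (deriv g) x| ≤ L₂)
    (hL₃ : ∀ x, |deriv (deriv (deriv g)) x| ≤ L₃)
    (y z : ℝ) :
    |iteratedDeriv 3 (fun y' => α (y', z)) y|
      ≤ Real.exp ((5 * K + 4 * L₂ + L₃) * |z|) := by
  -- basic nonnegativity
  have hK0 : 0 ≤ K := (abs_nonneg _).trans (hK 0)
  have hL₂0 : 0 ≤ L₂ := (abs_nonneg _).trans (hL₂ 0)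
  have hL₃0 : 0 ≤ L₃ := (abs_nonneg _).trans (hL₃ 0)
  -- smoothness of derivatives of g
  have hg1 : ContDiff ℝ 2 (deriv g) :=
    (contDiff_succ_iff_deriv.mp (hg.of_le (by norm_num))).2.2
  have hg2 : ContDiff ℝ 1 (deriv (deriv g)) :=
    (contDiff_succ_iff_deriv.mp (hg1.of_le (by norm_num))).2.2
  have hgd : ∀ x, HasDerivAt g (deriv g x) x :=
    fun x => (hg.differentiable (by norm_num) x).hasDerivAt
  have hg'd : ∀ x, HasDerivAt (deriv g) (deriv (deriv g) x) x :=
    fun x => (hg1.differentiable (by norm_num) x).hasDerivAt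
  have hg''d : ∀ x, HasDerivAt (deriv (deriv g)) (deriv (deriv (deriv g)) x) x :=
    fun x => (hg2.differentiable one_ne_zero x).hasDerivAt
  -- the partial derivatives in y
  set A₁ : ℝ × ℝ → ℝ := fun p => fderiv ℝ α p ((1 : ℝ), (0 : ℝ)) with hA₁def
  set A₂ : ℝ × ℝ → ℝ := fun p => fderiv ℝ A₁ p ((1 : ℝ), (0 : ℝ)) with hA₂def
  set A₃ : ℝ × ℝ → ℝ := fun p => fderiv ℝ A₂ p ((1 : ℝ), (0 : ℝ)) with hA₃def
  have hA₁ : ContDiff ℝ 3 A₁ := (hα.fderiv_right (by norm_num)).clm_apply contDiff_const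
  have hA₂ : ContDiff ℝ 2 A₂ := (hA₁.fderiv_right (by norm_num)).clm_apply contDiff_const
  have hA₃ : ContDiff ℝ 1 A₃ := (hA₂.fderiv_right (by norm_num)).clm_apply contDiff_const
  have hαd : Differentiable ℝ α := hα.differentiable (by norm_num)
  have hA₁d : Differentiable ℝ A₁ := hA₁.differentiable (by norm_num)
  have hA₂d : Differentiable ℝ A₂ := hA₂.differentiable (by norm_num)
  have hA₃d : Differentiable ℝ A₃ := hA₃.differentiable one_ne_zero
  -- y-section derivatives
  have hyα : ∀ p : ℝ × ℝ, HasDerivAt (fun y' => α (y', p.2)) (A₁ p) p.1 :=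
    fun p => secY hαd p
  have hyA₁ : ∀ p : ℝ × ℝ, HasDerivAt (fun y' => A₁ (y', p.2)) (A₂ p) p.1 :=
    fun p => secY hA₁d p
  have hyA₂ : ∀ p : ℝ × ℝ, HasDerivAt (fun y' => A₂ (y', p.2)) (A₃ p) p.1 :=
    fun p => secY hA₂d p
  -- the ODE in fderiv form
  have hfz : ∀ p : ℝ × ℝ, fderiv ℝ α p ((0 : ℝ), (1 : ℝ)) = g (α p) :=
    fun p => (secZ hαd p).unique (hode p.1 p.2)
  -- z-derivative of A₁
  have hzA₁ : ∀ p : ℝ × ℝ, HasDerivAt (fun z' => A₁ (p.1, z'))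
      (deriv g (α p) * A₁ p) p.2 := by
    intro p
    have hs := swapD (hα.of_le (by norm_num)) hfz p
    have hG : Differentiable ℝ (fun q : ℝ × ℝ => g (α q)) :=
      (hg.differentiable (by norm_num)).comp hαd
    have h1 := secY hG p
    have h2 : HasDerivAt (fun y' => g (α (y', p.2))) (deriv g (α p) * A₁ p) p.1 :=
      (hgd (α p)).comp p.1 (hyα p)
    have heq := h1.unique h2
    rw [heq] at hs
    exact hs
  have hfzA₁ : ∀ p : ℝ × ℝ, fderiv ℝ A₁ p ((0 : ℝ), (1 : ℝ)) = deriv g (α p) * A₁ p :=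
    fun p => (secZ hA₁d p).unique (hzA₁ p)
  -- z-derivative of A₂
  have hzA₂ : ∀ p : ℝ × ℝ, HasDerivAt (fun z' => A₂ (p.1, z'))
      (deriv (deriv g) (α p) * A₁ p * A₁ p + deriv g (α p) * A₂ p) p.2 := by
    intro p
    have hs := swapD (hA₁.of_le (by norm_num)) hfzA₁ p
    have hw : Differentiable ℝ (fun q : ℝ × ℝ => deriv g (α q) * A₁ q) :=
      ((hg1.differentiable (by norm_num)).comp hαd).mul hA₁d
    have h1 := secY hw p
    have h2 : HasDerivAt (fun y' => deriv g (α (y', p.2)) * A₁ (y', p.2))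
        (deriv (deriv g) (α p) * A₁ p * A₁ p + deriv g (α p) * A₂ p) p.1 :=
      HasDerivAt.fun_mul (by have := (hg'd (α p)).comp p.1 (hyα p); exact this) (hyA₁ p)
    have heq := h1.unique h2
    rw [heq] at hs
    exact hs
  have hfzA₂ : ∀ p : ℝ × ℝ, fderiv ℝ A₂ p ((0 : ℝ), (1 : ℝ))
      = deriv (deriv g) (α p) * A₁ p * A₁ p + deriv g (α p) * A₂ p :=
    fun p => (secZ hA₂d p).unique (hzA₂ p)
  -- z-derivative of A₃
  have hzA₃ : ∀ p : ℝ × ℝ, HasDerivAt (fun z' => A₃ (p.1, z'))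
      (deriv (deriv (deriv g)) (α p) * A₁ p * A₁ p * A₁ p
        + 3 * (deriv (deriv g) (α p) * A₁ p * A₂ p) + deriv g (α p) * A₃ p) p.2 := by
    intro p
    have hs := swapD hA₂ hfzA₂ p
    have hw : Differentiable ℝ (fun q : ℝ × ℝ =>
        deriv (deriv g) (α q) * A₁ q * A₁ q + deriv g (α q) * A₂ q) :=
      ((((hg2.differentiable one_ne_zero).comp hαd).mul hA₁d).mul hA₁d).add
        (((hg1.differentiable (by norm_num)).comp hαd).mul hA₂d)
    have h1 := secY hw p
    have h2 : HasDerivAt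
        (fun y' => deriv (deriv g) (α (y', p.2)) * A₁ (y', p.2) * A₁ (y', p.2)
          + deriv g (α (y', p.2)) * A₂ (y', p.2))
        (deriv (deriv (deriv g)) (α p) * A₁ p * A₁ p * A₁ p
          + 3 * (deriv (deriv g) (α p) * A₁ p * A₂ p) + deriv g (α p) * A₃ p) p.1 :=
      hasDerivAt_congr_deriv
        (HasDerivAt.fun_add ((HasDerivAt.fun_mul (by have := (hg''d (α p)).comp p.1 (hyα p); exact this) (hyA₁ p)).fun_mul (hyA₁ p))
          (HasDerivAt.fun_mul (by have := (hg'd (α p)).comp p.1 (hyα p); exact this) (hyA₂ p)))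
        (by simp only [Function.comp_apply, Prod.mk.eta]; ring)
    have heq := h1.unique h2
    rw [heq] at hs
    exact hs
  -- initial conditions
  have hA₁0 : ∀ y : ℝ, A₁ (y, 0) = 1 := by
    intro y
    have h : HasDerivAt (fun y' => α (y', 0)) (A₁ (y, 0)) y := hyα (y, 0)
    simp only [hinit] at h
    exact h.unique (hasDerivAt_id y)
  have hA₂0 : ∀ y : ℝ, A₂ (y, 0) = 0 := by
    intro y
    have h : HasDerivAt (fun y' => A₁ (y', 0)) (A₂ (y, 0)) y := hyA₁ (y, 0)
    simp only [hA₁0] at h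
    exact h.unique (hasDerivAt_const y (1 : ℝ))
  have hA₃0 : ∀ y : ℝ, A₃ (y, 0) = 0 := by
    intro y
    have h : HasDerivAt (fun y' => A₂ (y', 0)) (A₃ (y, 0)) y := hyA₂ (y, 0)
    simp only [hA₂0] at h
    exact h.unique (hasDerivAt_const y (0 : ℝ))

  -- Gronwall estimates
  have E₁ : ∀ y t : ℝ, |A₁ (y, t)| ≤ Real.exp (K * |t|) := by
    intro y t
    have h := gron_abs (fun s => A₁ (y, s)) (fun s => deriv g (α (y, s)) * A₁ (y, s))
      (fun s => hzA₁ (y, s)) K 0 1 t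
      (fun s _ => by
        rw [abs_mul]
        have h1 := hK (α (y, s))
        nlinarith [abs_nonneg (A₁ (y, s)), abs_nonneg (deriv g (α (y, s)))])
      (by simp [hA₁0 y])
    rwa [gronwallBound_ε0, one_mul] at h
  have E₂ : ∀ y t : ℝ, |A₂ (y, t)| ≤ Real.exp ((3 * K + L₂) * |t|) := by
    intro y t
    have hb : ∀ s, |s| ≤ |t| →
        |deriv (deriv g) (α (y, s)) * A₁ (y, s) * A₁ (y, s) + deriv g (α (y, s)) * A₂ (y, s)|
          ≤ K * |A₂ (y, s)| + L₂ * Real.exp (2 * K * |t|) := by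
      intro s hs
      have e1 : |A₁ (y, s)| ≤ Real.exp (K * |t|) :=
        (E₁ y s).trans (Real.exp_le_exp.mpr (mul_le_mul_of_nonneg_left hs hK0))
      have e2 : |A₁ (y, s)| * |A₁ (y, s)| ≤ Real.exp (2 * K * |t|) := by
        have h3 := mul_le_mul e1 e1 (abs_nonneg _) (Real.exp_nonneg _)
        rwa [← Real.exp_add, show K * |t| + K * |t| = 2 * K * |t| by ring] at h3
      have t1 : |deriv (deriv g) (α (y, s)) * A₁ (y, s) * A₁ (y, s)|
          ≤ L₂ * Real.exp (2 * K * |t|) := by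
        rw [abs_mul, abs_mul]
        have h4 := hL₂ (α (y, s))
        nlinarith [abs_nonneg (deriv (deriv g) (α (y, s))), abs_nonneg (A₁ (y, s)), hL₂0,
          mul_nonneg (abs_nonneg (A₁ (y, s))) (abs_nonneg (A₁ (y, s))),
          Real.exp_nonneg (2 * K * |t|)]
      have t2 : |deriv g (α (y, s)) * A₂ (y, s)| ≤ K * |A₂ (y, s)| := by
        rw [abs_mul]
        exact mul_le_mul_of_nonneg_right (hK _) (abs_nonneg _)
      calc |deriv (deriv g) (α (y, s)) * A₁ (y, s) * A₁ (y, s) + deriv g (α (y, s)) * A₂ (y, s)|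
          ≤ |deriv (deriv g) (α (y, s)) * A₁ (y, s) * A₁ (y, s)|
            + |deriv g (α (y, s)) * A₂ (y, s)| := abs_add_le _ _
        _ ≤ K * |A₂ (y, s)| + L₂ * Real.exp (2 * K * |t|) := by linarith
    have h := gron_abs (fun s => A₂ (y, s))
      (fun s => deriv (deriv g) (α (y, s)) * A₁ (y, s) * A₁ (y, s)
        + deriv g (α (y, s)) * A₂ (y, s))
      (fun s => hzA₂ (y, s)) K (L₂ * Real.exp (2 * K * |t|)) 0 t hb (by simp [hA₂0 y])
    have h2 := gronwallBound_le' (δ := 0) (K := K) (ε := L₂ * Real.exp (2 * K * |t|))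
      (x := |t|) hK0 (by positivity) (abs_nonneg t)
    refine (h.trans h2).trans ?_
    have h5 : L₂ * |t| ≤ Real.exp (L₂ * |t|) := self_le_exp _
    calc 0 * Real.exp (K * |t|) + L₂ * Real.exp (2 * K * |t|) * |t| * Real.exp (K * |t|)
        = (L₂ * |t|) * Real.exp (2 * K * |t| + K * |t|) := by rw [Real.exp_add]; ring
      _ ≤ Real.exp (L₂ * |t|) * Real.exp (2 * K * |t| + K * |t|) :=
          mul_le_mul_of_nonneg_right h5 (Real.exp_nonneg _)
      _ = Real.exp (L₂ * |t| + (2 * K * |t| + K * |t|)) := (Real.exp_add _ _).symm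
      _ = Real.exp ((3 * K + L₂) * |t|) := by congr 1; ring
  have E₃ : |A₃ (y, z)| ≤ Real.exp ((5 * K + 4 * L₂ + L₃) * |z|) := by
    set EE := Real.exp ((4 * K + L₂) * |z|) with hEE
    set P := Real.exp (K * |z|) with hP
    set Q := Real.exp ((3 * K + L₂) * |z|) with hQ
    have hP0 : 0 ≤ P := Real.exp_nonneg _
    have hQ0 : 0 ≤ Q := Real.exp_nonneg _
    have hPPP : P * P * P ≤ EE := by
      rw [hP, hEE, ← Real.exp_add, ← Real.exp_add]
      refine Real.exp_le_exp.mpr ?_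
      nlinarith [mul_nonneg hK0 (abs_nonneg z), mul_nonneg hL₂0 (abs_nonneg z)]
    have hPQ : P * Q = EE := by
      rw [hP, hQ, hEE, ← Real.exp_add]; congr 1; ring
    have hε0 : (0:ℝ) ≤ (3 * L₂ + L₃) * EE := by positivity
    have hb : ∀ s, |s| ≤ |z| →
        |deriv (deriv (deriv g)) (α (y, s)) * A₁ (y, s) * A₁ (y, s) * A₁ (y, s)
          + 3 * (deriv (deriv g) (α (y, s)) * A₁ (y, s) * A₂ (y, s))
          + deriv g (α (y, s)) * A₃ (y, s)|
          ≤ K * |A₃ (y, s)| + (3 * L₂ + L₃) * EE := by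
      intro s hs
      have c1 : |A₁ (y, s)| ≤ P :=
        (E₁ y s).trans (Real.exp_le_exp.mpr (mul_le_mul_of_nonneg_left hs hK0))
      have c1' : |A₂ (y, s)| ≤ Q :=
        (E₂ y s).trans (Real.exp_le_exp.mpr
          (mul_le_mul_of_nonneg_left hs (by linarith)))
      have ha := abs_nonneg (A₁ (y, s))
      have c2 : |A₁ (y, s)| * |A₁ (y, s)| ≤ P * P := mul_le_mul c1 c1 ha hP0
      have c3 : |A₁ (y, s)| * |A₁ (y, s)| * |A₁ (y, s)| ≤ P * P * P :=
        mul_le_mul c2 c1 ha (mul_nonneg hP0 hP0)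
      have t1 : |deriv (deriv (deriv g)) (α (y, s)) * A₁ (y, s) * A₁ (y, s) * A₁ (y, s)|
          ≤ L₃ * (P * P * P) := by
        rw [abs_mul, abs_mul, abs_mul]
        calc |deriv (deriv (deriv g)) (α (y, s))| * |A₁ (y, s)| * |A₁ (y, s)| * |A₁ (y, s)|
            = |deriv (deriv (deriv g)) (α (y, s))|
              * (|A₁ (y, s)| * |A₁ (y, s)| * |A₁ (y, s)|) := by ring
          _ ≤ L₃ * (P * P * P) :=
              mul_le_mul (hL₃ _) c3 (by positivity) hL₃0
      have t2 : |3 * (deriv (deriv g) (α (y, s)) * A₁ (y, s) * A₂ (y, s))|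
          ≤ 3 * (L₂ * P * Q) := by
        rw [abs_mul, abs_mul, abs_mul]
        have d1 : |deriv (deriv g) (α (y, s))| * |A₁ (y, s)| ≤ L₂ * P :=
          mul_le_mul (hL₂ _) c1 ha hL₂0
        have d2 : |deriv (deriv g) (α (y, s))| * |A₁ (y, s)| * |A₂ (y, s)| ≤ L₂ * P * Q :=
          mul_le_mul d1 c1' (abs_nonneg _) (by positivity)
        have : |(3:ℝ)| = 3 := by norm_num
        rw [this]
        linarith
      have t3 : |deriv g (α (y, s)) * A₃ (y, s)| ≤ K * |A₃ (y, s)| := by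
        rw [abs_mul]
        exact mul_le_mul_of_nonneg_right (hK _) (abs_nonneg _)
      have f1 : L₃ * (P * P * P) ≤ L₃ * EE := mul_le_mul_of_nonneg_left hPPP hL₃0
      have f2 : L₂ * P * Q = L₂ * EE := by rw [mul_assoc, hPQ]
      calc |deriv (deriv (deriv g)) (α (y, s)) * A₁ (y, s) * A₁ (y, s) * A₁ (y, s)
            + 3 * (deriv (deriv g) (α (y, s)) * A₁ (y, s) * A₂ (y, s))
            + deriv g (α (y, s)) * A₃ (y, s)|
          ≤ |deriv (deriv (deriv g)) (α (y, s)) * A₁ (y, s) * A₁ (y, s) * A₁ (y, s)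
            + 3 * (deriv (deriv g) (α (y, s)) * A₁ (y, s) * A₂ (y, s))|
            + |deriv g (α (y, s)) * A₃ (y, s)| := abs_add_le _ _
        _ ≤ |deriv (deriv (deriv g)) (α (y, s)) * A₁ (y, s) * A₁ (y, s) * A₁ (y, s)|
            + |3 * (deriv (deriv g) (α (y, s)) * A₁ (y, s) * A₂ (y, s))|
            + |deriv g (α (y, s)) * A₃ (y, s)| := by
              linarith [abs_add_le (deriv (deriv (deriv g)) (α (y, s)) * A₁ (y, s) * A₁ (y, s)
                * A₁ (y, s)) (3 * (deriv (deriv g) (α (y, s)) * A₁ (y, s) * A₂ (y, s)))]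
        _ ≤ K * |A₃ (y, s)| + (3 * L₂ + L₃) * EE := by linarith
    have h := gron_abs (fun s => A₃ (y, s))
      (fun s => deriv (deriv (deriv g)) (α (y, s)) * A₁ (y, s) * A₁ (y, s) * A₁ (y, s)
        + 3 * (deriv (deriv g) (α (y, s)) * A₁ (y, s) * A₂ (y, s))
        + deriv g (α (y, s)) * A₃ (y, s))
      (fun s => hzA₃ (y, s)) K ((3 * L₂ + L₃) * EE) 0 z hb (by simp [hA₃0 y])
    have h2 := gronwallBound_le' (δ := 0) (K := K) (ε := (3 * L₂ + L₃) * EE)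
      (x := |z|) hK0 hε0 (abs_nonneg z)
    refine (h.trans h2).trans ?_
    have h5 : (3 * L₂ + L₃) * |z| ≤ Real.exp ((3 * L₂ + L₃) * |z|) := self_le_exp _
    calc 0 * Real.exp (K * |z|) + (3 * L₂ + L₃) * EE * |z| * Real.exp (K * |z|)
        = ((3 * L₂ + L₃) * |z|) * Real.exp ((4 * K + L₂) * |z| + K * |z|) := by
          rw [Real.exp_add, hEE]; ring
      _ ≤ Real.exp ((3 * L₂ + L₃) * |z|) * Real.exp ((4 * K + L₂) * |z| + K * |z|) :=
          mul_le_mul_of_nonneg_right h5 (Real.exp_nonneg _)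
      _ = Real.exp ((3 * L₂ + L₃) * |z| + ((4 * K + L₂) * |z| + K * |z|)) :=
          (Real.exp_add _ _).symm
      _ = Real.exp ((5 * K + 4 * L₂ + L₃) * |z|) := by congr 1; ring
  -- identify the iterated derivative
  have hd1 : deriv (fun y' => α (y', z)) = fun y' => A₁ (y', z) :=
    funext fun y' => (hyα (y', z)).deriv
  have hd2 : deriv (fun y' => A₁ (y', z)) = fun y' => A₂ (y', z) :=
    funext fun y' => (hyA₁ (y', z)).deriv
  have hd3 : deriv (fun y' => A₂ (y', z)) = fun y' => A₃ (y', z) :=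
    funext fun y' => (hyA₂ (y', z)).deriv
  have hiter : iteratedDeriv 3 (fun y' => α (y', z)) = fun y' => A₃ (y', z) := by
    rw [show (3 : ℕ) = 2 + 1 by norm_num, iteratedDeriv_succ,
      show (2 : ℕ) = 1 + 1 by norm_num, iteratedDeriv_succ, iteratedDeriv_one, hd1, hd2, hd3]
  rw [hiter]
  exact E₃

end core

/-- If `g` is `C³` with `|g'| ≤ C₁`, `|g''| ≤ C₂`, `|g'''| ≤ C₃` and `α`
is `C⁴` and solves the Doss ODE `∂α/∂z (y,z) = g (α (y,z))`, `α (y,0) = y`, then there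
is a constant `C > 0`, depending only on the bounds `C₁, C₂, C₃`, such that
`|∂³α/∂y³ (y,z)| ≤ exp (C|z|)`. -/
theorem stmt_6 (C₁ C₂ C₃ : ℝ) :
    ∃ C > 0, ∀ g : ℝ → ℝ, ContDiff ℝ 3 g →
      (∀ x : ℝ, |deriv g x| ≤ C₁) → (∀ x : ℝ, |iteratedDeriv 2 g x| ≤ C₂) →
      (∀ x : ℝ, |iteratedDeriv 3 g x| ≤ C₃) →
      ∀ α : ℝ × ℝ → ℝ, ContDiff ℝ 4 α →
      (∀ y z : ℝ, HasDerivAt (fun z' => α (y, z')) (g (α (y, z))) z) →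
      (∀ y : ℝ, α (y, 0) = y) →
      ∀ y z : ℝ, |iteratedDeriv 3 (fun y' => α (y', z)) y| ≤ Real.exp (C * |z|) := by
  refine ⟨5 * max C₁ 0 + 4 * max C₂ 0 + max C₃ 0 + 1, ?_, ?_⟩
  · have h1 := le_max_right C₁ 0
    have h2 := le_max_right C₂ 0
    have h3 := le_max_right C₃ 0
    linarith
  intro g hg hC₁ hC₂ hC₃ α hα hode hinit y z
  have e2 : iteratedDeriv 2 g = deriv (deriv g) := by
    rw [show (2 : ℕ) = 1 + 1 by norm_num, iteratedDeriv_succ, iteratedDeriv_one]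
  have e3 : iteratedDeriv 3 g = deriv (deriv (deriv g)) := by
    rw [show (3 : ℕ) = 2 + 1 by norm_num, iteratedDeriv_succ, e2]
  have h := key g hg α hα hode hinit (max C₁ 0) (max C₂ 0) (max C₃ 0)
    (fun x => (hC₁ x).trans (le_max_left _ _))
    (fun x => by rw [← e2]; exact (hC₂ x).trans (le_max_left _ _))
    (fun x => by rw [← e3]; exact (hC₃ x).trans (le_max_left _ _)) y z
  refine h.trans (Real.exp_le_exp.mpr ?_)
  have hz := abs_nonneg z
  nlinarith
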